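/- If (R₁, ⟹¹) and (R₂, ⟹²) are reduction rings, then the direct sum R = R₁ × R₂ with componentwise operations and the reduction relation defined by (α₁,α₂) →_{(β₁,β₂)} (γ₁,γ₂) iff (α₁ ⟹¹_{β₁} γ₁ and α₂ = γ₂) or (α₁ = γ₁ and α₂ ⟹²_{β₂} γ₂) or (α₁ ⟹¹_{β₁} γ₁ and α₂ ⟹²_{β₂} γ₂), is again a reduction ring: every finitely generated ideal of R has a finite Gröbner basis. -/

import Mathlib

/-- The (two-sided) ideal generated by a set `B`: all finite sums `∑ gᵢ * bᵢ * hᵢ`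
with `bᵢ ∈ B`. -/
def idealSpan {A : Type*} [Ring A] (B : Set A) : Set A :=
  {x | ∃ (n : ℕ) (g h b : Fin n → A), (∀ i, b i ∈ B) ∧ x = ∑ i, g i * b i * h i}

/-- Reduction by a set: `a ⟹_B c` iff `a ⟹_b c` for some `b ∈ B`. -/
def RedBy {A : Type*} (red : A → A → A → Prop) (B : Set A) (a c : A) : Prop :=
  ∃ b ∈ B, red b a c

/-- A relation is terminating (Noetherian) if it admits no infinite chains. -/
def Terminating {A : Type*} (r : A → A → Prop) : Prop :=
  ¬ ∃ f : ℕ → A, ∀ n, r (f n) (f (n + 1))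

/-- Confluence of a relation. -/
def Confluent {A : Type*} (r : A → A → Prop) : Prop :=
  ∀ a b c : A, Relation.ReflTransGen r a b → Relation.ReflTransGen r a c →
    ∃ d, Relation.ReflTransGen r b d ∧ Relation.ReflTransGen r c d

/-- `G` is a Gröbner basis of the ideal `I`. -/
def GBOf {A : Type*} [Ring A] (red : A → A → A → Prop) (G : Set A) (I : Set A) : Prop :=
  idealSpan G = I ∧
    (∀ a b : A, Relation.EqvGen (RedBy red G) a b ↔ a - b ∈ I) ∧
    Terminating (RedBy red G) ∧ Confluent (RedBy red G)

/-- The reduction relation on the direct sum `R₁ × R₂`. -/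
def prodRed {R₁ R₂ : Type*} (red1 : R₁ → R₁ → R₁ → Prop) (red2 : R₂ → R₂ → R₂ → Prop) :
    (R₁ × R₂) → (R₁ × R₂) → (R₁ × R₂) → Prop := fun b a c =>
  (red1 b.1 a.1 c.1 ∧ a.2 = c.2) ∨ (a.1 = c.1 ∧ red2 b.2 a.2 c.2) ∨
    (red1 b.1 a.1 c.1 ∧ red2 b.2 a.2 c.2)

section IdealSpanLemmas

variable {A : Type*} [Ring A]

lemma zero_mem_idealSpan (B : Set A) : (0 : A) ∈ idealSpan B :=
  ⟨0, (fun i => i.elim0), (fun i => i.elim0), (fun i => i.elim0), fun i => i.elim0, by simp⟩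

lemma term_mem_idealSpan {B : Set A} {b : A} (hb : b ∈ B) (g h : A) :
    g * b * h ∈ idealSpan B :=
  ⟨1, fun _ => g, fun _ => h, fun _ => b, fun _ => hb, by simp⟩

lemma add_mem_idealSpan {B : Set A} {x y : A} (hx : x ∈ idealSpan B)
    (hy : y ∈ idealSpan B) : x + y ∈ idealSpan B := by
  obtain ⟨n, g, h, b, hb, rfl⟩ := hx
  obtain ⟨m, g', h', b', hb', rfl⟩ := hy
  refine ⟨n + m, Fin.append g g', Fin.append h h', Fin.append b b', ?_, ?_⟩
  · intro i
    refine Fin.addCases (fun i => ?_) (fun i => ?_) i <;>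
      simp [Fin.append_left, Fin.append_right, hb _, hb' _]
  · rw [Fin.sum_univ_add]
    simp [Fin.append_left, Fin.append_right]

lemma sum_mem_idealSpan {B : Set A} {ι : Type*} (s : Finset ι) (f : ι → A)
    (hf : ∀ i ∈ s, f i ∈ idealSpan B) : ∑ i ∈ s, f i ∈ idealSpan B := by
  classical
  induction s using Finset.induction with
  | empty => simpa using zero_mem_idealSpan B
  | insert _ _ hns ih =>
      rw [Finset.sum_insert hns]
      exact add_mem_idealSpan (hf _ (Finset.mem_insert_self _ _))
        (ih fun i hi => hf i (Finset.mem_insert_of_mem hi))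

lemma idealSpan_zero : idealSpan ({0} : Set A) = {0} := by
  ext x
  constructor
  · rintro ⟨n, g, h, b, hb, rfl⟩
    have hz : ∀ i, g i * b i * h i = 0 := fun i => by
      have : b i = 0 := hb i
      simp [this]
    simp [hz]
  · rintro rfl
    exact zero_mem_idealSpan _

end IdealSpanLemmas

section Term

variable {α : Type*} {r : α → α → Prop}

lemma Terminating.wellFounded (h : Terminating r) : WellFounded (fun a b => r b a) := by
  classical
  by_contra hwf
  apply h
  have hex : ∃ a, ¬ Acc (fun a b => r b a) a := by
    by_contra h'
    push_neg at h'
    exact hwf ⟨h'⟩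
  obtain ⟨a, ha⟩ := hex
  have key : ∀ x, ¬ Acc (fun a b => r b a) x →
      ∃ y, r x y ∧ ¬ Acc (fun a b => r b a) y := by
    intro x hx
    by_contra h'
    push_neg at h'
    exact hx (Acc.intro x fun y hy => by_contra fun hny => hny (h' y hy))
  choose nxt hr hnacc using key
  let f : ℕ → {x // ¬ Acc (fun a b => r b a) x} :=
    fun n => Nat.rec ⟨a, ha⟩ (fun _ p => ⟨nxt p.1 p.2, hnacc _ _⟩) n
  exact ⟨fun n => (f n).1, fun n => hr _ _⟩

lemma wellFounded_terminating (h : WellFounded (fun a b => r b a)) : Terminating r := by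
  rintro ⟨f, hf⟩
  have key : ∀ x, Acc (fun a b => r b a) x → ∀ n, f n = x → False := by
    intro x hx
    induction hx with
    | intro x _ ih =>
        intro n hn
        exact ih (f (n + 1)) (hn ▸ hf n) (n + 1) rfl
  exact key (f 0) (h.apply _) 0 rfl

end Term

section ProdRel

open Relation

variable {α β : Type*} {r₁ : α → α → Prop} {r₂ : β → β → Prop}
  {S : α × β → α × β → Prop}
  (hS : ∀ a c, S a c ↔ (r₁ a.1 c.1 ∧ a.2 = c.2) ∨ (a.1 = c.1 ∧ r₂ a.2 c.2))

include hS

lemma lift_rtg_fst {x y : α} (h : ReflTransGen r₁ x y) (z : β) :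
    ReflTransGen S (x, z) (y, z) := by
  induction h with
  | refl => exact ReflTransGen.refl
  | tail _ h2 ih => exact ih.tail ((hS _ _).2 (Or.inl ⟨h2, rfl⟩))

lemma lift_rtg_snd {x y : β} (h : ReflTransGen r₂ x y) (z : α) :
    ReflTransGen S (z, x) (z, y) := by
  induction h with
  | refl => exact ReflTransGen.refl
  | tail _ h2 ih => exact ih.tail ((hS _ _).2 (Or.inr ⟨rfl, h2⟩))

lemma rtg_prod_iff (a b : α × β) :
    ReflTransGen S a b ↔ ReflTransGen r₁ a.1 b.1 ∧ ReflTransGen r₂ a.2 b.2 := by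
  constructor
  · intro h
    induction h with
    | refl => exact ⟨ReflTransGen.refl, ReflTransGen.refl⟩
    | tail _ h2 ih =>
        rcases (hS _ _).1 h2 with ⟨h1, he⟩ | ⟨he, h2'⟩
        · exact ⟨ih.1.tail h1, he ▸ ih.2⟩
        · exact ⟨he ▸ ih.1, ih.2.tail h2'⟩
  · rintro ⟨h1, h2⟩
    exact (lift_rtg_fst hS h1 a.2).trans (lift_rtg_snd hS h2 b.1)

lemma lift_eqv_fst {x y : α} (h : EqvGen r₁ x y) (z : β) :
    EqvGen S (x, z) (y, z) := by
  induction h with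
  | rel a b h => exact EqvGen.rel _ _ ((hS _ _).2 (Or.inl ⟨h, rfl⟩))
  | refl a => exact EqvGen.refl _
  | symm a b _ ih => exact EqvGen.symm _ _ ih
  | trans a b c _ _ ih1 ih2 => exact EqvGen.trans _ _ _ ih1 ih2

lemma lift_eqv_snd {x y : β} (h : EqvGen r₂ x y) (z : α) :
    EqvGen S (z, x) (z, y) := by
  induction h with
  | rel a b h => exact EqvGen.rel _ _ ((hS _ _).2 (Or.inr ⟨rfl, h⟩))
  | refl a => exact EqvGen.refl _
  | symm a b _ ih => exact EqvGen.symm _ _ ih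
  | trans a b c _ _ ih1 ih2 => exact EqvGen.trans _ _ _ ih1 ih2

lemma eqv_prod_iff (a b : α × β) :
    EqvGen S a b ↔ EqvGen r₁ a.1 b.1 ∧ EqvGen r₂ a.2 b.2 := by
  constructor
  · intro h
    induction h with
    | rel a b h =>
        rcases (hS _ _).1 h with ⟨h1, he⟩ | ⟨he, h2⟩
        · exact ⟨EqvGen.rel _ _ h1, he ▸ EqvGen.refl _⟩
        · exact ⟨he ▸ EqvGen.refl _, EqvGen.rel _ _ h2⟩
    | refl a => exact ⟨EqvGen.refl _, EqvGen.refl _⟩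
    | symm a b _ ih => exact ⟨EqvGen.symm _ _ ih.1, EqvGen.symm _ _ ih.2⟩
    | trans a b c _ _ ih1 ih2 =>
        exact ⟨EqvGen.trans _ _ _ ih1.1 ih2.1, EqvGen.trans _ _ _ ih1.2 ih2.2⟩
  · rintro ⟨h1, h2⟩
    exact EqvGen.trans _ _ _ (lift_eqv_fst hS h1 a.2) (lift_eqv_snd hS h2 b.1)

lemma terminating_prod (h1 : Terminating r₁) (h2 : Terminating r₂) :
    Terminating S := by
  apply wellFounded_terminating
  refine Subrelation.wf (r := Prod.GameAdd (fun a b => r₁ b a) (fun a b => r₂ b a))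
    ?_ (h1.wellFounded.prod_gameAdd h2.wellFounded)
  intro x y hxy
  rw [Prod.gameAdd_iff]
  rcases (hS _ _).1 hxy with ⟨h1', he⟩ | ⟨he, h2'⟩
  · exact Or.inl ⟨h1', he.symm⟩
  · exact Or.inr ⟨h2', he.symm⟩

lemma confluent_prod (c1 : Confluent r₁) (c2 : Confluent r₂) : Confluent S := by
  intro a b c hab hac
  rw [rtg_prod_iff hS] at hab hac
  obtain ⟨d1, hbd1, hcd1⟩ := c1 _ _ _ hab.1 hac.1
  obtain ⟨d2, hbd2, hcd2⟩ := c2 _ _ _ hab.2 hac.2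
  exact ⟨(d1, d2), (rtg_prod_iff hS _ _).2 ⟨hbd1, hbd2⟩,
    (rtg_prod_iff hS _ _).2 ⟨hcd1, hcd2⟩⟩

end ProdRel
section SpanProd

variable {R₁ R₂ : Type*} [Ring R₁] [Ring R₂]

lemma fst_mem_of_mem_idealSpan {B : Set (R₁ × R₂)} {x : R₁ × R₂}
    (hx : x ∈ idealSpan B) {C : Set R₁} (hC : ∀ b ∈ B, b.1 ∈ C ∨ b.1 = 0) :
    x.1 ∈ idealSpan C := by
  obtain ⟨n, g, h, b, hb, rfl⟩ := hx
  rw [Prod.fst_sum]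
  refine sum_mem_idealSpan Finset.univ _ fun i _ => ?_
  rcases hC (b i) (hb i) with hmem | hzero
  · simpa using term_mem_idealSpan hmem (g i).1 (h i).1
  · simp [hzero]
    exact zero_mem_idealSpan _

lemma snd_mem_of_mem_idealSpan {B : Set (R₁ × R₂)} {x : R₁ × R₂}
    (hx : x ∈ idealSpan B) {C : Set R₂} (hC : ∀ b ∈ B, b.2 ∈ C ∨ b.2 = 0) :
    x.2 ∈ idealSpan C := by
  obtain ⟨n, g, h, b, hb, rfl⟩ := hx
  rw [Prod.snd_sum]
  refine sum_mem_idealSpan Finset.univ _ fun i _ => ?_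
  rcases hC (b i) (hb i) with hmem | hzero
  · simpa using term_mem_idealSpan hmem (g i).2 (h i).2
  · simp [hzero]
    exact zero_mem_idealSpan _

lemma pair_fst_mem_idealSpan {B : Set (R₁ × R₂)} {C : Set R₁} {x : R₁}
    (hx : x ∈ idealSpan C) (hC : ∀ c ∈ C, ∃ b ∈ B, b.1 = c) :
    ((x, (0 : R₂)) : R₁ × R₂) ∈ idealSpan B := by
  obtain ⟨n, g, h, b, hb, rfl⟩ := hx
  choose b' hbB hb1 using fun i => hC (b i) (hb i)
  refine ⟨n, fun i => (g i, 0), fun i => (h i, 0), b', hbB, ?_⟩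
  refine Prod.ext ?_ ?_
  · rw [Prod.fst_sum]
    simp [hb1]
  · rw [Prod.snd_sum]
    simp

lemma pair_snd_mem_idealSpan {B : Set (R₁ × R₂)} {C : Set R₂} {x : R₂}
    (hx : x ∈ idealSpan C) (hC : ∀ c ∈ C, ∃ b ∈ B, b.2 = c) :
    (((0 : R₁), x) : R₁ × R₂) ∈ idealSpan B := by
  obtain ⟨n, g, h, b, hb, rfl⟩ := hx
  choose b' hbB hb2 using fun i => hC (b i) (hb i)
  refine ⟨n, fun i => (0, g i), fun i => (0, h i), b', hbB, ?_⟩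
  refine Prod.ext ?_ ?_
  · rw [Prod.fst_sum]
    simp
  · rw [Prod.snd_sum]
    simp [hb2]

end SpanProd

/-- The direct sum of two reduction rings is again a reduction ring: every
finitely generated ideal of `R₁ × R₂` has a finite Gröbner basis with respect
to the componentwise reduction relation. -/
theorem prod_reduction_ring {R₁ R₂ : Type*} [Ring R₁] [Ring R₂]
    (red1 : R₁ → R₁ → R₁ → Prop) (red2 : R₂ → R₂ → R₂ → Prop)
    (hA1₁ : ∀ B : Set R₁, B.Finite → Terminating (RedBy red1 B))
    (hA2₁ : ∀ b a c : R₁, red1 b a c → a - c ∈ idealSpan {b})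
    (hA3₁ : ∀ a : R₁, a ≠ 0 → red1 a a 0)
    (hRR₁ : ∀ B : Set R₁, B.Finite → ∃ G : Set R₁, G.Finite ∧ GBOf red1 G (idealSpan B))
    (hA1₂ : ∀ B : Set R₂, B.Finite → Terminating (RedBy red2 B))
    (hA2₂ : ∀ b a c : R₂, red2 b a c → a - c ∈ idealSpan {b})
    (hA3₂ : ∀ a : R₂, a ≠ 0 → red2 a a 0)
    (hRR₂ : ∀ B : Set R₂, B.Finite → ∃ G : Set R₂, G.Finite ∧ GBOf red2 G (idealSpan B)) :
    ∀ B : Set (R₁ × R₂), B.Finite →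
      ∃ G : Set (R₁ × R₂), G.Finite ∧ GBOf (prodRed red1 red2) G (idealSpan B) := by
  intro B hB
  -- reduction by 0 is impossible
  have hr0₁ : ∀ a c : R₁, ¬ red1 0 a c := by
    intro a c h
    have hac : a - c ∈ idealSpan ({0} : Set R₁) := hA2₁ 0 a c h
    rw [idealSpan_zero] at hac
    have hac' : a = c := by
      have := Set.mem_singleton_iff.1 hac
      rwa [sub_eq_zero] at this
    subst hac'
    exact hA1₁ {0} (Set.finite_singleton 0)
      ⟨fun _ => a, fun _ => ⟨0, Set.mem_singleton 0, h⟩⟩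
  have hr0₂ : ∀ a c : R₂, ¬ red2 0 a c := by
    intro a c h
    have hac : a - c ∈ idealSpan ({0} : Set R₂) := hA2₂ 0 a c h
    rw [idealSpan_zero] at hac
    have hac' : a = c := by
      have := Set.mem_singleton_iff.1 hac
      rwa [sub_eq_zero] at this
    subst hac'
    exact hA1₂ {0} (Set.finite_singleton 0)
      ⟨fun _ => a, fun _ => ⟨0, Set.mem_singleton 0, h⟩⟩
  -- component Gröbner bases
  obtain ⟨G₁, hG₁fin, hspan₁, heqv₁, hterm₁, hconf₁⟩ := hRR₁ (Prod.fst '' B) (hB.image _)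
  obtain ⟨G₂, hG₂fin, hspan₂, heqv₂, hterm₂, hconf₂⟩ := hRR₂ (Prod.snd '' B) (hB.image _)
  set G : Set (R₁ × R₂) :=
    ((fun g => (g, (0 : R₂))) '' G₁) ∪ ((fun g => ((0 : R₁), g)) '' G₂) with hGdef
  -- step characterization
  have hstep : ∀ a c : R₁ × R₂, RedBy (prodRed red1 red2) G a c ↔
      (RedBy red1 G₁ a.1 c.1 ∧ a.2 = c.2) ∨ (a.1 = c.1 ∧ RedBy red2 G₂ a.2 c.2) := by
    intro a c
    constructor
    · rintro ⟨b, hb, hred⟩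
      rcases hb with ⟨g, hg, rfl⟩ | ⟨g, hg, rfl⟩
      · rcases hred with ⟨h1, he⟩ | ⟨he, h2⟩ | ⟨h1, h2⟩
        · exact Or.inl ⟨⟨g, hg, h1⟩, he⟩
        · exact absurd h2 (hr0₂ _ _)
        · exact absurd h2 (hr0₂ _ _)
      · rcases hred with ⟨h1, he⟩ | ⟨he, h2⟩ | ⟨h1, h2⟩
        · exact absurd h1 (hr0₁ _ _)
        · exact Or.inr ⟨he, ⟨g, hg, h2⟩⟩
        · exact absurd h1 (hr0₁ _ _)
    · rintro (⟨⟨g, hg, h1⟩, he⟩ | ⟨he, ⟨g, hg, h2⟩⟩)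
      · exact ⟨(g, 0), Or.inl ⟨g, hg, rfl⟩, Or.inl ⟨h1, he⟩⟩
      · exact ⟨(0, g), Or.inr ⟨g, hg, rfl⟩, Or.inr (Or.inl ⟨he, h2⟩)⟩
  -- span characterizations
  have hGspan : ∀ x : R₁ × R₂,
      x ∈ idealSpan G ↔ x.1 ∈ idealSpan G₁ ∧ x.2 ∈ idealSpan G₂ := by
    intro x
    constructor
    · intro hx
      constructor
      · refine fst_mem_of_mem_idealSpan hx ?_
        rintro b (⟨g, hg, rfl⟩ | ⟨g, hg, rfl⟩)
        · exact Or.inl hg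
        · exact Or.inr rfl
      · refine snd_mem_of_mem_idealSpan hx ?_
        rintro b (⟨g, hg, rfl⟩ | ⟨g, hg, rfl⟩)
        · exact Or.inr rfl
        · exact Or.inl hg
    · rintro ⟨h1, h2⟩
      have hx1 : ((x.1, (0 : R₂)) : R₁ × R₂) ∈ idealSpan G :=
        pair_fst_mem_idealSpan h1 fun c hc => ⟨(c, 0), Or.inl ⟨c, hc, rfl⟩, rfl⟩
      have hx2 : (((0 : R₁), x.2) : R₁ × R₂) ∈ idealSpan G :=
        pair_snd_mem_idealSpan h2 fun c hc => ⟨(0, c), Or.inr ⟨c, hc, rfl⟩, rfl⟩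
      have := add_mem_idealSpan hx1 hx2
      simpa using this
  have hBspan : ∀ x : R₁ × R₂,
      x ∈ idealSpan B ↔ x.1 ∈ idealSpan (Prod.fst '' B) ∧ x.2 ∈ idealSpan (Prod.snd '' B) := by
    intro x
    constructor
    · intro hx
      exact ⟨fst_mem_of_mem_idealSpan hx fun b hb => Or.inl ⟨b, hb, rfl⟩,
        snd_mem_of_mem_idealSpan hx fun b hb => Or.inl ⟨b, hb, rfl⟩⟩
    · rintro ⟨h1, h2⟩
      have hx1 : ((x.1, (0 : R₂)) : R₁ × R₂) ∈ idealSpan B :=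
        pair_fst_mem_idealSpan h1 (by rintro c ⟨b, hb, rfl⟩; exact ⟨b, hb, rfl⟩)
      have hx2 : (((0 : R₁), x.2) : R₁ × R₂) ∈ idealSpan B :=
        pair_snd_mem_idealSpan h2 (by rintro c ⟨b, hb, rfl⟩; exact ⟨b, hb, rfl⟩)
      have := add_mem_idealSpan hx1 hx2
      simpa using this
  refine ⟨G, (hG₁fin.image _).union (hG₂fin.image _), ?_, ?_, ?_, ?_⟩
  · ext x
    rw [hGspan x, hBspan x, hspan₁, hspan₂]
  · intro a b
    rw [eqv_prod_iff hstep, heqv₁, heqv₂, hBspan (a - b)]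
    rfl
  · exact terminating_prod hstep hterm₁ hterm₂
  · exact confluent_prod hstep hconf₁ hconf₂
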